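/- Let t > 0, γ > 0, r > 0, p₁ < 1 with p₁ ≠ 0, λ > 0 and c̄ > 0. Let W_t be a Gaussian random variable with mean 0 and variance t, set Z := exp(−(r + γ²/2)t − γ W_t) and define the optimal consumption c* := max((λZ)^(1/(p₁−1)), c̄). Then, with a := c̄^(p₁−1)/λ, the expected power utility of optimal consumption satisfies E[(c*)^(p₁)/p₁] = (λ^(p₁/(p₁−1))/p₁) · ξ(t, 0, 1, p₁/(p₁−1), 0, a) + (c̄^(p₁)/p₁) · ξ(t, 0, 1, 0, a, +∞). -/

import Mathlib

open MeasureTheory ProbabilityTheory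

open scoped ENNReal NNReal

/-- Cumulative distribution function of the standard normal distribution. -/
noncomputable def Phi (x : ℝ) : ℝ := ((gaussianReal 0 1) (Set.Iic x)).toReal

lemma setIntegral_gaussianReal {v : ℝ≥0} (hv : v ≠ 0) (m : ℝ) (g : ℝ → ℝ) {s : Set ℝ}
    (hs : MeasurableSet s) :
    ∫ x in s, g x ∂(gaussianReal m v) = ∫ x in s, gaussianPDFReal m v x * g x := by
  rw [gaussianReal_of_var_ne_zero m hv, gaussianPDF_def,
    show (fun x => ENNReal.ofReal (gaussianPDFReal m v x))
        = fun x => (((gaussianPDFReal m v x).toNNReal : ℝ≥0) : ℝ≥0∞) from rfl,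
    setIntegral_withDensity_eq_setIntegral_smul
      ((measurable_gaussianPDFReal m v).real_toNNReal) g hs]
  refine setIntegral_congr_fun hs fun x _ => ?_
  simp [NNReal.smul_def, Real.coe_toNNReal _ (gaussianPDFReal_nonneg m v x)]

lemma integrable_gaussianReal_iff {v : ℝ≥0} (hv : v ≠ 0) (m : ℝ) {g : ℝ → ℝ} :
    Integrable g (gaussianReal m v)
      ↔ Integrable (fun x => gaussianPDFReal m v x * g x) volume := by
  rw [gaussianReal_of_var_ne_zero m hv, gaussianPDF_def,
    show (fun x => ENNReal.ofReal (gaussianPDFReal m v x))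
        = fun x => (((gaussianPDFReal m v x).toNNReal : ℝ≥0) : ℝ≥0∞) from rfl,
    integrable_withDensity_iff_integrable_smul
      ((measurable_gaussianPDFReal m v).real_toNNReal)]
  constructor <;> intro h <;> refine h.congr (Filter.Eventually.of_forall fun x => ?_) <;>
    simp [NNReal.smul_def, Real.coe_toNNReal _ (gaussianPDFReal_nonneg m v x)]

lemma gaussianReal_eq_map {t : ℝ} (ht : 0 < t) (m : ℝ) :
    gaussianReal m t.toNNReal
      = (gaussianReal 0 1).map (fun x => Real.sqrt t * x + m) := by
  have h1 : (gaussianReal (0:ℝ) 1).map (Real.sqrt t * ·) = gaussianReal 0 t.toNNReal := by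
    rw [gaussianReal_map_const_mul]
    congr 1
    · ring
    · ext
      simp [Real.sq_sqrt ht.le, Real.coe_toNNReal _ ht.le]
  have h2 : (gaussianReal (0:ℝ) t.toNNReal).map (· + m) = gaussianReal m t.toNNReal := by
    rw [gaussianReal_map_add_const, zero_add]
  rw [← h2, ← h1, Measure.map_map (by exact measurable_id.add_const m)
    (by exact measurable_const_mul _)]
  rfl

lemma gaussianReal_Iic {t : ℝ} (ht : 0 < t) (m u : ℝ) :
    ((gaussianReal m t.toNNReal) (Set.Iic u)).toReal = Phi ((u - m) / Real.sqrt t) := by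
  have hst : (0:ℝ) < Real.sqrt t := Real.sqrt_pos.mpr ht
  rw [gaussianReal_eq_map ht m, Measure.map_apply
    (by exact (measurable_const_mul _).add_const m) measurableSet_Iic]
  have : (fun x => Real.sqrt t * x + m) ⁻¹' Set.Iic u = Set.Iic ((u - m) / Real.sqrt t) := by
    ext x
    simp only [Set.mem_preimage, Set.mem_Iic]
    rw [le_div_iff₀ hst, mul_comm, ← sub_nonneg]
    constructor <;> intro h <;> linarith
  rw [this]
  rfl

lemma gaussianReal_singleton {t : ℝ} (ht : 0 < t) (m u : ℝ) :
    (gaussianReal m t.toNNReal) {u} = 0 :=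
  gaussianReal_absolutelyContinuous m (by simpa using Real.toNNReal_pos.mpr ht |>.ne')
    (measure_singleton u)

lemma gaussianReal_Iio {t : ℝ} (ht : 0 < t) (m u : ℝ) :
    ((gaussianReal m t.toNNReal) (Set.Iio u)).toReal = Phi ((u - m) / Real.sqrt t) := by
  have : (gaussianReal m t.toNNReal) (Set.Iio u) = (gaussianReal m t.toNNReal) (Set.Iic u) := by
    rw [← Set.Iio_union_right, measure_union (by simp) (measurableSet_singleton u),
      gaussianReal_singleton ht m u, add_zero]
  rw [this, gaussianReal_Iic ht]

lemma gaussianReal_Ici {t : ℝ} (ht : 0 < t) (m u : ℝ) :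
    ((gaussianReal m t.toNNReal) (Set.Ici u)).toReal = 1 - Phi ((u - m) / Real.sqrt t) := by
  have h : (Set.Ici u) = (Set.Iio u)ᶜ := by simp
  rw [h, measure_compl measurableSet_Iio (measure_ne_top _ _), measure_univ,
    ENNReal.toReal_sub_of_le prob_le_one ENNReal.one_ne_top, ENNReal.toReal_one,
    gaussianReal_Iio ht]

lemma toNNReal_ne_zero {t : ℝ} (ht : 0 < t) : t.toNNReal ≠ 0 :=
  (Real.toNNReal_pos.mpr ht).ne'

lemma pdf_mul_exp {t : ℝ} (ht : 0 < t) (θ x : ℝ) :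
    gaussianPDFReal 0 t.toNNReal x * Real.exp (θ * x)
      = Real.exp (θ ^ 2 * t / 2) * gaussianPDFReal (θ * t) t.toNNReal x := by
  simp only [gaussianPDFReal, Real.coe_toNNReal t ht.le, sub_zero]
  rw [mul_assoc, ← Real.exp_add, mul_left_comm, ← Real.exp_add]
  congr 2
  field_simp
  ring

lemma integrable_exp_gaussian {t : ℝ} (ht : 0 < t) (θ : ℝ) :
    Integrable (fun x => Real.exp (θ * x)) (gaussianReal 0 t.toNNReal) := by
  rw [integrable_gaussianReal_iff (toNNReal_ne_zero ht)]
  refine ((integrable_gaussianPDFReal (θ * t) t.toNNReal).const_mul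
    (Real.exp (θ ^ 2 * t / 2))).congr (Filter.Eventually.of_forall fun x => ?_)
  exact (pdf_mul_exp ht θ x).symm

lemma integral_exp_Ici {t : ℝ} (ht : 0 < t) (θ u : ℝ) :
    ∫ x in Set.Ici u, Real.exp (θ * x) ∂(gaussianReal 0 t.toNNReal)
      = Real.exp (θ ^ 2 * t / 2) * (1 - Phi ((u - θ * t) / Real.sqrt t)) := by
  rw [setIntegral_gaussianReal (toNNReal_ne_zero ht) 0 _ measurableSet_Ici,
    setIntegral_congr_fun measurableSet_Ici (fun x _ => pdf_mul_exp ht θ x),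
    MeasureTheory.integral_const_mul]
  congr 1
  have h := gaussianReal_apply_eq_integral (θ * t) (toNNReal_ne_zero ht) (Set.Ici u)
  have h2 : ((gaussianReal (θ * t) t.toNNReal) (Set.Ici u)).toReal
      = ∫ x in Set.Ici u, gaussianPDFReal (θ * t) t.toNNReal x := by
    rw [h, ENNReal.toReal_ofReal]
    exact setIntegral_nonneg measurableSet_Ici fun x _ => gaussianPDFReal_nonneg _ _ x
  rw [← h2, gaussianReal_Ici ht]


/-- `Φ(d̄(x) + kγ√(s − t))`, where `d̄(x) = (ln(z/x) − (r + γ²/2)(s − t)) / (γ √(s − t))`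
for `x ∈ (0, ∞)`, with the conventions `Φ(d̄(0) + u) = 1` and `Φ(d̄(∞) + u) = 0`. -/
noncomputable def PhiDbar (γ r s t z k : ℝ) (x : ℝ≥0∞) : ℝ :=
  if x = 0 then 1
  else if x = ⊤ then 0
  else Phi ((Real.log (z / x.toReal) - (r + γ ^ 2 / 2) * (s - t)) / (γ * Real.sqrt (s - t))
      + k * γ * Real.sqrt (s - t))

/-- `ξ(s, t, z, k, a, b; γ, r)`. -/
noncomputable def xi (γ r s t z k : ℝ) (a b : ℝ≥0∞) : ℝ :=
  z ^ k * Real.exp (-k * (r + γ ^ 2 / 2) * (s - t) + k ^ 2 * γ ^ 2 / 2 * (s - t)) *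
    (PhiDbar γ r s t z k a - PhiDbar γ r s t z k b) * (if a < b then 1 else 0)

/-- `h(t₁, t₂) = exp((μ_F − σ_F²/2 − σ_F r/γ − σ_F γ/2)(t₂ − t₁))`. -/
noncomputable def hF (γ r μF σF t₁ t₂ : ℝ) : ℝ :=
  Real.exp ((μF - σF ^ 2 / 2 - σF * r / γ - σF * γ / 2) * (t₂ - t₁))

theorem expected_utility_optimal_consumption
    (t γ r p₁ lam c : ℝ)
    (ht : 0 < t) (hγ : 0 < γ) (hr : 0 < r) (hp : p₁ < 1) (hp0 : p₁ ≠ 0)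
    (hlam : 0 < lam) (hc : 0 < c) :
    (∫ w, (max ((lam * Real.exp (-(r + γ ^ 2 / 2) * t - γ * w)) ^ (1 / (p₁ - 1))) c) ^ p₁ / p₁
        ∂(gaussianReal 0 (Real.toNNReal t)))
      = lam ^ (p₁ / (p₁ - 1)) / p₁ *
          xi γ r t 0 1 (p₁ / (p₁ - 1)) 0 (ENNReal.ofReal (c ^ (p₁ - 1) / lam))
        + c ^ p₁ / p₁ * xi γ r t 0 1 0 (ENNReal.ofReal (c ^ (p₁ - 1) / lam)) ⊤ := by
  have hp1 : p₁ - 1 < 0 := by linarith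
  have hp1' : p₁ - 1 ≠ 0 := hp1.ne
  set k : ℝ := p₁ / (p₁ - 1) with hk
  set a : ℝ := c ^ (p₁ - 1) / lam with ha_def
  have hcp : 0 < c ^ (p₁ - 1) := Real.rpow_pos_of_pos hc _
  have ha : 0 < a := div_pos hcp hlam
  set u : ℝ := (-Real.log a - (r + γ ^ 2 / 2) * t) / γ with hu
  have hst : (0:ℝ) < Real.sqrt t := Real.sqrt_pos.mpr ht
  set d0 : ℝ := (Real.log (1 / a) - (r + γ ^ 2 / 2) * t) / (γ * Real.sqrt t) with hd0
  -- RHS xi evaluations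
  have hofa0 : (ENNReal.ofReal a) ≠ 0 := (ENNReal.ofReal_pos.mpr ha).ne'
  have hxi1 : xi γ r t 0 1 k 0 (ENNReal.ofReal a)
      = Real.exp (-k * ((r + γ ^ 2 / 2) * t) + k ^ 2 * γ ^ 2 / 2 * t)
          * (1 - Phi (d0 + k * γ * Real.sqrt t)) := by
    rw [xi, PhiDbar, PhiDbar, if_pos rfl, if_neg hofa0, if_neg ENNReal.ofReal_ne_top,
      if_pos (ENNReal.ofReal_pos.mpr ha), ENNReal.toReal_ofReal ha.le]
    rw [Real.one_rpow, sub_zero, one_mul, mul_one, hd0]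
    ring_nf
  have hxi2 : xi γ r t 0 1 0 (ENNReal.ofReal a) ⊤ = Phi d0 := by
    rw [xi, PhiDbar, PhiDbar, if_neg hofa0, if_neg ENNReal.ofReal_ne_top,
      if_neg (by simp : ¬(⊤:ℝ≥0∞) = 0), if_pos (rfl : (⊤:ℝ≥0∞) = ⊤),
      if_pos ENNReal.ofReal_lt_top, ENNReal.toReal_ofReal ha.le]
    simp [hd0]
  -- pointwise rewriting of the integrand
  have key : ∀ w : ℝ,
      (max ((lam * Real.exp (-(r + γ ^ 2 / 2) * t - γ * w)) ^ (1 / (p₁ - 1))) c) ^ p₁ / p₁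
        = (if u ≤ w then
            lam ^ k * Real.exp (k * (-(r + γ ^ 2 / 2) * t - γ * w)) else c ^ p₁) / p₁ := by
    intro w
    have hE : 0 < Real.exp (-(r + γ ^ 2 / 2) * t - γ * w) := Real.exp_pos _
    have hP : 0 < lam * Real.exp (-(r + γ ^ 2 / 2) * t - γ * w) := mul_pos hlam hE
    have hca : c ^ (p₁ - 1) = lam * a := by
      rw [ha_def, mul_div_cancel₀ _ hlam.ne']
    have hiff : lam * Real.exp (-(r + γ ^ 2 / 2) * t - γ * w) ≤ c ^ (p₁ - 1) ↔ u ≤ w := by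
      rw [hca, mul_le_mul_iff_right₀ hlam, ← Real.exp_log ha, Real.exp_le_exp, hu,
        div_le_iff₀ hγ]
      constructor <;> intro h <;> nlinarith
    have hexp : (1 : ℝ) / (p₁ - 1) ≤ 0 := le_of_lt (by
      rw [one_div_neg]; exact hp1)
    have hcc : (c ^ (p₁ - 1)) ^ ((1:ℝ) / (p₁ - 1)) = c := by
      rw [← Real.rpow_mul hc.le, mul_one_div_cancel hp1', Real.rpow_one]
    by_cases h : u ≤ w
    · have h1 : lam * Real.exp (-(r + γ ^ 2 / 2) * t - γ * w) ≤ c ^ (p₁ - 1) := hiff.mpr h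
      have h2 : c ≤ (lam * Real.exp (-(r + γ ^ 2 / 2) * t - γ * w)) ^ ((1:ℝ) / (p₁ - 1)) := by
        rw [← hcc]
        exact Real.rpow_le_rpow_of_nonpos hP h1 hexp
      rw [max_eq_left h2, if_pos h, ← Real.rpow_mul hP.le, one_div_mul_eq_div, ← hk,
        Real.mul_rpow hlam.le hE.le, ← Real.exp_mul, mul_comm _ k]
    · have h1 : c ^ (p₁ - 1) ≤ lam * Real.exp (-(r + γ ^ 2 / 2) * t - γ * w) :=
        le_of_lt (lt_of_not_ge (fun hh => h (hiff.mp hh)))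
      have h2 : (lam * Real.exp (-(r + γ ^ 2 / 2) * t - γ * w)) ^ ((1:ℝ) / (p₁ - 1)) ≤ c := by
        rw [← hcc]
        exact Real.rpow_le_rpow_of_nonpos hcp h1 hexp
      rw [max_eq_right h2, if_neg h]
  rw [integral_congr_ae (Filter.Eventually.of_forall key), integral_div]
  have hg1 : Integrable (fun w => lam ^ k * Real.exp (k * (-(r + γ ^ 2 / 2) * t - γ * w)))
      (gaussianReal 0 t.toNNReal) := by
    have h0 := (integrable_exp_gaussian ht (-(k * γ))).const_mul
      (lam ^ k * Real.exp (k * (-(r + γ ^ 2 / 2) * t)))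
    refine h0.congr (Filter.Eventually.of_forall fun w => ?_)
    show lam ^ k * Real.exp (k * (-(r + γ ^ 2 / 2) * t)) * Real.exp (-(k * γ) * w)
        = lam ^ k * Real.exp (k * (-(r + γ ^ 2 / 2) * t - γ * w))
    rw [mul_assoc, ← Real.exp_add]
    congr 1
    exact congrArg Real.exp (by ring)
  have hG : Integrable (fun w =>
      if u ≤ w then lam ^ k * Real.exp (k * (-(r + γ ^ 2 / 2) * t - γ * w)) else c ^ p₁)
      (gaussianReal 0 t.toNNReal) := by
    have heq : (fun w : ℝ =>
        if u ≤ w then lam ^ k * Real.exp (k * (-(r + γ ^ 2 / 2) * t - γ * w)) else c ^ p₁)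
        = fun w => Set.indicator (Set.Ici u)
            (fun w => lam ^ k * Real.exp (k * (-(r + γ ^ 2 / 2) * t - γ * w))) w
          + Set.indicator (Set.Iio u) (fun _ => c ^ p₁) w := by
      funext w
      by_cases h : u ≤ w
      · simp [Set.indicator_apply, h, not_lt.mpr h]
      · simp [Set.indicator_apply, h, not_le.mp h]
    rw [heq]
    exact (hg1.indicator measurableSet_Ici).add ((integrable_const _).indicator measurableSet_Iio)
  have e1 : ∫ x in Set.Ici u,
      (if u ≤ x then lam ^ k * Real.exp (k * (-(r + γ ^ 2 / 2) * t - γ * x)) else c ^ p₁)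
        ∂(gaussianReal 0 t.toNNReal)
      = ∫ x in Set.Ici u, lam ^ k * Real.exp (k * (-(r + γ ^ 2 / 2) * t - γ * x))
        ∂(gaussianReal 0 t.toNNReal) :=
    setIntegral_congr_fun measurableSet_Ici (fun x hx => if_pos hx)
  have e2 : ∫ x in Set.Iio u,
      (if u ≤ x then lam ^ k * Real.exp (k * (-(r + γ ^ 2 / 2) * t - γ * x)) else c ^ p₁)
        ∂(gaussianReal 0 t.toNNReal)
      = ∫ _x in Set.Iio u, c ^ p₁ ∂(gaussianReal 0 t.toNNReal) :=
    setIntegral_congr_fun measurableSet_Iio (fun x (hx : x < u) => if_neg (not_le.mpr hx))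
  rw [← integral_add_compl measurableSet_Ici hG, Set.compl_Ici, e1, e2, setIntegral_const]
  have hIci : ∫ x in Set.Ici u,
      lam ^ k * Real.exp (k * (-(r + γ ^ 2 / 2) * t - γ * x)) ∂(gaussianReal 0 t.toNNReal)
      = lam ^ k * Real.exp (k * (-(r + γ ^ 2 / 2) * t)) *
          (Real.exp ((-(k * γ)) ^ 2 * t / 2)
            * (1 - Phi ((u - -(k * γ) * t) / Real.sqrt t))) := by
    rw [← integral_exp_Ici ht (-(k * γ)) u, ← MeasureTheory.integral_const_mul]
    refine setIntegral_congr_fun measurableSet_Ici fun x _ => ?_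
    rw [mul_assoc, ← Real.exp_add]
    congr 1
    exact congrArg Real.exp (by ring)
  rw [hIci, measureReal_def, gaussianReal_Iio ht 0 u]
  have hA : (u - -(k * γ) * t) / Real.sqrt t = d0 + k * γ * Real.sqrt t := by
    have h1 : u - -(k * γ) * t = u + k * γ * t := by ring
    rw [h1, add_div, hu, div_div, hd0, one_div, Real.log_inv, mul_div_assoc, Real.div_sqrt]
  have hud : (u - 0) / Real.sqrt t = d0 := by
    rw [sub_zero, hu, div_div, hd0, one_div, Real.log_inv]
  have hee : Real.exp (k * (-(r + γ ^ 2 / 2) * t)) * Real.exp ((-(k * γ)) ^ 2 * t / 2)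
      = Real.exp (-k * ((r + γ ^ 2 / 2) * t) + k ^ 2 * γ ^ 2 / 2 * t) := by
    rw [← Real.exp_add]
    exact congrArg Real.exp (by ring)
  rw [hA, hud, hxi1, hxi2, smul_eq_mul, ← hee]
  field_simp
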